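/- Let G be a {C₃,C₄}-free graph with maximum degree at most 3 and vertex weights a*, d*, and suppose uw ∈ E(G) where deg(u) = 3 and a*(w) = 0. If (G, a*, d*) is a YES-instance of (1,1)-Cluster Editing witnessed by matchings D and A, then uw ∈ D. -/

import Mathlib

open SimpleGraph

variable {V : Type*}

/-- A graph whose edge set is a matching: every vertex has at most one neighbour. -/
def IsMatchingGraph (M : SimpleGraph V) : Prop :=
  ∀ ⦃v w w' : V⦄, M.Adj v w → M.Adj v w' → w = w'

/-- A cluster graph: every connected component is a complete graph. -/
def IsClusterGraph (G : SimpleGraph V) : Prop :=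
  ∀ ⦃u v w : V⦄, G.Adj u v → G.Adj v w → u ≠ w → G.Adj u w

/-- No `C₃` (triangle) subgraph. -/
def TriangleFree (G : SimpleGraph V) : Prop :=
  ∀ ⦃u v w : V⦄, G.Adj u v → G.Adj v w → G.Adj u w → False

/-- No `C₄` subgraph. -/
def C4Free (G : SimpleGraph V) : Prop :=
  ∀ ⦃p q r s : V⦄, p ≠ r → q ≠ s →
    G.Adj p q → G.Adj q r → G.Adj r s → G.Adj s p → False

/-- Degree of a vertex (as the cardinality of its neighbourhood). -/
noncomputable def ndeg (G : SimpleGraph V) (v : V) : ℕ := {w | G.Adj v w}.ncard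

/-- Maximum degree at most `n`. -/
def MaxDegLE (G : SimpleGraph V) (n : ℕ) : Prop := ∀ v, ndeg G v ≤ n

/-- `D` is a matching of deletable edges of `G` (w.r.t. weights `d`). -/
def DelMatching (G D : SimpleGraph V) (d : V → ℕ) : Prop :=
  D ≤ G ∧ IsMatchingGraph D ∧ ∀ ⦃u v : V⦄, D.Adj u v → d u = 1 ∧ d v = 1

/-- `A` is a matching of addable edges of the complement of `G` (w.r.t. weights `a`). -/
def AddMatching (G A : SimpleGraph V) (a : V → ℕ) : Prop :=
  A ≤ Gᶜ ∧ IsMatchingGraph A ∧ ∀ ⦃u v : V⦄, A.Adj u v → a u = 1 ∧ a v = 1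

/-- `(G, a, d)` is a YES-instance of `(1,1)`-Cluster Editing (matching formulation). -/
def HasSolution (G : SimpleGraph V) (a d : V → ℕ) : Prop :=
  ∃ D A : SimpleGraph V, DelMatching G D d ∧ AddMatching G A a ∧
    IsClusterGraph ((G \ D) ⊔ A)

/-- The component `c` of `H` is a `P₁` (single vertex). -/
def P1Comp (H : SimpleGraph V) (c : H.ConnectedComponent) : Prop :=
  ∃ v : V, c.supp = {v}

/-- The component `c` of `H` is a `P₂` (a single edge). -/
def P2Comp (H : SimpleGraph V) (c : H.ConnectedComponent) : Prop :=
  ∃ u v : V, H.Adj u v ∧ c.supp = {u, v}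

/-- The component `c` of `H` is a path `u - m - w` on three vertices. -/
def P3Comp (H : SimpleGraph V) (c : H.ConnectedComponent) (u m w : V) : Prop :=
  H.Adj u m ∧ H.Adj m w ∧ u ≠ w ∧ ¬ H.Adj u w ∧ c.supp = {u, m, w}

/-- The component `c` of `H` is a chordless cycle `p - q - r - s - p` on four vertices. -/
def C4Comp (H : SimpleGraph V) (c : H.ConnectedComponent) (p q r s : V) : Prop :=
  H.Adj p q ∧ H.Adj q r ∧ H.Adj r s ∧ H.Adj s p ∧ p ≠ r ∧ q ≠ s ∧
    ¬ H.Adj p r ∧ ¬ H.Adj q s ∧ c.supp = {p, q, r, s}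

/-- Every connected component of `H` is isomorphic to `P₁`, `P₂`, `P₃` or `C₄`. -/
def GoodComponents (H : SimpleGraph V) : Prop :=
  ∀ c : H.ConnectedComponent,
    P1Comp H c ∨ P2Comp H c ∨ (∃ u m w, P3Comp H c u m w) ∨
      (∃ p q r s, C4Comp H c p q r s)

/-- `G` contains `K_{2,3}` as a subgraph. -/
def ContainsK23 (G : SimpleGraph V) : Prop :=
  ∃ x₁ x₂ y₁ y₂ y₃ : V, x₁ ≠ x₂ ∧ y₁ ≠ y₂ ∧ y₁ ≠ y₃ ∧ y₂ ≠ y₃ ∧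
    G.Adj x₁ y₁ ∧ G.Adj x₁ y₂ ∧ G.Adj x₁ y₃ ∧ G.Adj x₂ y₁ ∧ G.Adj x₂ y₂ ∧ G.Adj x₂ y₃

/-- in a {C₃,C₄}-free graph of max degree ≤ 3, an edge from a
degree-3 vertex to a vertex of `a`-value 0 must be deleted in any solution. -/
theorem stmt_17 {V : Type*} [Fintype V] [DecidableEq V] (G D A : SimpleGraph V)
    (a d : V → ℕ) (ha : ∀ v, a v ≤ 1) (hd : ∀ v, d v ≤ 1)
    (hT : TriangleFree G) (hC4 : C4Free G) (hdeg : MaxDegLE G 3)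
    (u w : V) (huw : G.Adj u w) (hu : ndeg G u = 3) (hw : a w = 0)
    (hD : DelMatching G D d) (hA : AddMatching G A a)
    (hsol : IsClusterGraph ((G \ D) ⊔ A)) :
    D.Adj u w := by
  by_contra huwD
  have hwS : w ∈ {x | G.Adj u x} := huw
  have hfin : ({x | G.Adj u x} : Set V).Finite := Set.toFinite _
  have h2 : 1 < ({x | G.Adj u x} \ {w} : Set V).ncard := by
    have h := Set.ncard_diff_singleton_add_one hwS hfin
    have hu' : ({x | G.Adj u x} : Set V).ncard = 3 := hu
    omega
  obtain ⟨z₁, z₂, hz₁, hz₂, hne⟩ :=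
    (Set.one_lt_ncard_iff (hfin.diff : ({x | G.Adj u x} \ {w} : Set V).Finite)).mp h2
  obtain ⟨hz₁G, hz₁w⟩ := hz₁
  obtain ⟨hz₂G, hz₂w⟩ := hz₂
  have hz₁w : z₁ ≠ w := hz₁w
  have hz₂w : z₂ ≠ w := hz₂w
  -- find z with G.Adj u z, z ≠ w, ¬ D.Adj u z
  obtain ⟨z, hzG, hzw, hzD⟩ : ∃ z, G.Adj u z ∧ z ≠ w ∧ ¬ D.Adj u z := by
    by_cases h1 : D.Adj u z₁
    · refine ⟨z₂, hz₂G, hz₂w, fun h2' => hne ?_⟩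
      exact (hD.2.1 h1 h2').symm ▸ rfl
    · exact ⟨z₁, hz₁G, hz₁w, h1⟩
  have hHuw : ((G \ D) ⊔ A).Adj u w := by
    simp only [sup_adj, sdiff_adj]
    exact Or.inl ⟨huw, huwD⟩
  have hHuz : ((G \ D) ⊔ A).Adj u z := by
    simp only [sup_adj, sdiff_adj]
    exact Or.inl ⟨hzG, hzD⟩
  have hHwz : ((G \ D) ⊔ A).Adj w z := hsol hHuw.symm hHuz (fun h => hzw h.symm)
  rcases hHwz with hG | hA'
  · exact hT huw hG.1 hzG
  · have := (hA.2.2 hA').1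
    omega
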